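/- Let m₁ ≥ 1 and m₂ ≥ 0 be integers, ρ = m₁/2 + m₂, λ ∈ ℂ, and 0 < T < ∞. Then every twice continuously differentiable function q : (0,T) → ℂ satisfying q''(t) + (m₁·coth(t) + 2m₂·coth(2t))·q'(t) + (ρ² − λ²)·q(t) = 0 for all t ∈ (0,T) has the property that the function t ↦ q(t)·(2·sinh t)^{m₁}·(2·sinh 2t)^{m₂} is Lebesgue (Bochner) integrable on (0,T). -/

import Mathlib

open Set Filter Topology MeasureTheory

noncomputable section

/-- `ρ = m₁/2 + m₂`. -/
def rho (m₁ m₂ : ℕ) : ℝ := m₁ / 2 + m₂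

/-- The hyperbolic cotangent. -/
def cothR (t : ℝ) : ℝ := Real.cosh t / Real.sinh t

/-- The radial eigenvalue equation in the variable `t`:
`q'' + (m₁ coth t + 2m₂ coth 2t) q' + (ρ² − λ²) q = 0`. -/
def RadialODEt (m₁ m₂ : ℕ) (lam : ℂ) (q : ℝ → ℂ) (t : ℝ) : Prop :=
  deriv (deriv q) t + ((m₁ * cothR t + 2 * m₂ * cothR (2 * t) : ℝ) : ℂ) * deriv q t
    + ((rho m₁ m₂ : ℂ) ^ 2 - lam ^ 2) * q t = 0

private lemma hasDerivAt_re_comp {f : ℝ → ℂ} {f' : ℂ} {t : ℝ} (hf : HasDerivAt f f' t) :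
    HasDerivAt (fun t => (f t).re) f'.re t := by
  have h := Complex.reCLM.hasFDerivAt.comp_hasDerivAt t hf; exact h

private lemma hasDerivAt_im_comp {f : ℝ → ℂ} {f' : ℂ} {t : ℝ} (hf : HasDerivAt f f' t) :
    HasDerivAt (fun t => (f t).im) f'.im t := by
  have h := Complex.imCLM.hasFDerivAt.comp_hasDerivAt t hf; exact h

private lemma hasDerivAt_normSq_comp {f : ℝ → ℂ} {f' : ℂ} {t : ℝ} (hf : HasDerivAt f f' t) :
    HasDerivAt (fun t => Complex.normSq (f t))
      (2 * ((f' ).re * (f t).re + (f' ).im * (f t).im)) t := by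
  have h1 := (hasDerivAt_re_comp hf).mul (hasDerivAt_re_comp hf)
  have h2 := (hasDerivAt_im_comp hf).mul (hasDerivAt_im_comp hf)
  have h := h1.add h2
  simp only [Complex.normSq_apply]
  refine h.congr_deriv ?_
  ring

private lemma hasDerivAt_weight (m₁ m₂ : ℕ) {t : ℝ} (ht : 0 < t) :
    HasDerivAt (fun t => (2*Real.sinh t)^m₁ * (2*Real.sinh (2*t))^m₂)
      ((m₁ * cothR t + 2*m₂ * cothR (2*t)) *
        ((2*Real.sinh t)^m₁ * (2*Real.sinh (2*t))^m₂)) t := by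
  have hs : Real.sinh t ≠ 0 := ne_of_gt (Real.sinh_pos_iff.2 ht)
  have hs2 : Real.sinh (2*t) ≠ 0 := ne_of_gt (Real.sinh_pos_iff.2 (by linarith))
  have h1 : HasDerivAt (fun t : ℝ => 2*Real.sinh t) (2*Real.cosh t) t :=
    (Real.hasDerivAt_sinh t).const_mul 2
  have hlin : HasDerivAt (fun t : ℝ => 2*t) 2 t := by simpa using (hasDerivAt_id t).const_mul 2
  have h2 : HasDerivAt (fun t : ℝ => 2*Real.sinh (2*t)) (2*(Real.cosh (2*t) * 2)) t :=
    ((Real.hasDerivAt_sinh (2*t)).comp t hlin).const_mul 2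
  have := (h1.pow m₁).mul (h2.pow m₂)
  refine this.congr_deriv ?_
  rcases m₁ with _ | n₁ <;> rcases m₂ with _ | n₂ <;>
    simp only [cothR, pow_succ, Nat.cast_zero, Nat.cast_succ, Nat.add_sub_cancel, pow_zero, Pi.pow_apply, Pi.mul_apply, Pi.one_apply] <;>
    field_simp <;> ring

set_option maxHeartbeats 1000000 in
theorem radial_solutions_locally_integrable (m₁ m₂ : ℕ) (hm₁ : 1 ≤ m₁) (lam : ℂ)
    (T : ℝ) (hT : 0 < T) (q : ℝ → ℂ)
    (hq : ContDiffOn ℝ 2 q (Set.Ioo 0 T))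
    (hODE : ∀ t ∈ Set.Ioo (0 : ℝ) T, RadialODEt m₁ m₂ lam q t) :
    MeasureTheory.IntegrableOn
      (fun t : ℝ => q t * (((2 * Real.sinh t) ^ m₁ * (2 * Real.sinh (2 * t)) ^ m₂ : ℝ) : ℂ))
      (Set.Ioo 0 T) := by
  classical
  set c : ℂ := (rho m₁ m₂ : ℂ) ^ 2 - lam ^ 2 with hc
  set c₀ : ℝ := 2 + Complex.normSq c with hc₀
  have hc₀pos : (0:ℝ) < c₀ := by
    have := Complex.normSq_nonneg c
    rw [hc₀]; linarith
  set q₁ : ℝ → ℂ := deriv q with hq₁def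
  set q₂ : ℝ → ℂ := deriv (deriv q) with hq₂def
  set w : ℝ → ℝ := fun t => (2*Real.sinh t)^m₁ * (2*Real.sinh (2*t))^m₂ with hwdef
  set b : ℝ → ℝ := fun t => m₁ * cothR t + 2*m₂ * cothR (2*t) with hbdef
  set E : ℝ → ℝ := fun t => Complex.normSq (q t) + Complex.normSq (q₁ t) with hEdef
  set eE : ℝ → ℝ := fun t =>
      2 * ((q₁ t).re * (q t).re + (q₁ t).im * (q t).im)
      + 2 * ((q₂ t).re * (q₁ t).re + (q₂ t).im * (q₁ t).im) with heEdef
  set G : ℝ → ℝ := fun t => (w t)^2 * E t * Real.exp (c₀ * t) with hGdef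
  set H : ℝ → ℝ := fun t => E t * Real.exp (-(c₀ * t)) with hHdef
  -- basic differentiability facts
  have hopen : IsOpen (Set.Ioo (0:ℝ) T) := isOpen_Ioo
  have hdq : ∀ t ∈ Set.Ioo (0:ℝ) T, HasDerivAt q (q₁ t) t := by
    intro t ht
    exact ((hq.differentiableOn (by norm_num)).differentiableAt
      (hopen.mem_nhds ht)).hasDerivAt
  have hq1cd : ContDiffOn ℝ 1 q₁ (Set.Ioo 0 T) :=
    hq.deriv_of_isOpen hopen (by norm_num)
  have hdq1 : ∀ t ∈ Set.Ioo (0:ℝ) T, HasDerivAt q₁ (q₂ t) t := by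
    intro t ht
    exact ((hq1cd.differentiableOn (by norm_num)).differentiableAt
      (hopen.mem_nhds ht)).hasDerivAt
  -- positivity of b and w
  have hbnn : ∀ t : ℝ, 0 < t → 0 ≤ b t := by
    intro t ht
    have h1 : 0 ≤ cothR t := by
      have := Real.sinh_pos_iff.2 ht
      exact div_nonneg (Real.cosh_pos (x := t)).le this.le
    have h2 : 0 ≤ cothR (2*t) := by
      have := Real.sinh_pos_iff.2 (show (0:ℝ) < 2*t by linarith)
      exact div_nonneg (Real.cosh_pos (x := 2*t)).le this.le
    have : (0:ℝ) ≤ (m₁:ℝ) := Nat.cast_nonneg _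
    positivity
  have hwpos : ∀ t : ℝ, 0 < t → 0 < w t := by
    intro t ht
    have h1 : 0 < 2*Real.sinh t := by have := Real.sinh_pos_iff.2 ht; linarith
    have h2 : 0 < 2*Real.sinh (2*t) := by
      have := Real.sinh_pos_iff.2 (show (0:ℝ) < 2*t by linarith); linarith
    positivity
  have hEnn : ∀ t : ℝ, 0 ≤ E t := fun t =>
    add_nonneg (Complex.normSq_nonneg _) (Complex.normSq_nonneg _)
  -- the ODE in solved form
  have hODE' : ∀ t ∈ Set.Ioo (0:ℝ) T, q₂ t = -((b t : ℝ) : ℂ) * q₁ t - c * q t := by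
    intro t ht
    have h := hODE t ht
    unfold RadialODEt at h
    simp only [hq₂def, hq₁def, hbdef, hc]
    linear_combination h
  -- derivative of E
  have hdE : ∀ t ∈ Set.Ioo (0:ℝ) T, HasDerivAt E (eE t) t := by
    intro t ht
    have h1 := hasDerivAt_normSq_comp (hdq t ht)
    have h2 := hasDerivAt_normSq_comp (hdq1 t ht)
    exact h1.add h2
  -- the two differential inequalities
  have hE1 : ∀ t ∈ Set.Ioo (0:ℝ) T, 0 ≤ eE t + (2*b t + c₀) * E t := by
    intro t ht
    have heq := hODE' t ht
    have hre : (q₂ t).re = -(b t) * (q₁ t).re - (c.re * (q t).re - c.im * (q t).im) := by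
      rw [heq]; simp [Complex.mul_re, Complex.mul_im]; try ring
    have him : (q₂ t).im = -(b t) * (q₁ t).im - (c.re * (q t).im + c.im * (q t).re) := by
      rw [heq]; simp [Complex.mul_re, Complex.mul_im]; try ring
    have hb := hbnn t ht.1
    simp only [heEdef, hEdef, hc₀, Complex.normSq_apply, hre, him]
    set A := (q t).re; set B := (q t).im; set C := (q₁ t).re; set D := (q₁ t).im
    set cr := c.re; set ci := c.im
    nlinarith [sq_nonneg (A + C), sq_nonneg (B + D), sq_nonneg (cr*A - ci*B - C),
      sq_nonneg (cr*B + ci*A - D), mul_nonneg hb (sq_nonneg A), mul_nonneg hb (sq_nonneg B)]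
  have hE2 : ∀ t ∈ Set.Ioo (0:ℝ) T, eE t ≤ c₀ * E t := by
    intro t ht
    have heq := hODE' t ht
    have hre : (q₂ t).re = -(b t) * (q₁ t).re - (c.re * (q t).re - c.im * (q t).im) := by
      rw [heq]; simp [Complex.mul_re, Complex.mul_im]; try ring
    have him : (q₂ t).im = -(b t) * (q₁ t).im - (c.re * (q t).im + c.im * (q t).re) := by
      rw [heq]; simp [Complex.mul_re, Complex.mul_im]; try ring
    have hb := hbnn t ht.1
    simp only [heEdef, hEdef, hc₀, Complex.normSq_apply, hre, him]
    set A := (q t).re; set B := (q t).im; set C := (q₁ t).re; set D := (q₁ t).im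
    set cr := c.re; set ci := c.im
    nlinarith [sq_nonneg (A - C), sq_nonneg (B - D), sq_nonneg (cr*A - ci*B + C),
      sq_nonneg (cr*B + ci*A + D), mul_nonneg hb (sq_nonneg C), mul_nonneg hb (sq_nonneg D),
      sq_nonneg (A + C), sq_nonneg (B + D)]
  -- derivative of G and H
  have hdG : ∀ t ∈ Set.Ioo (0:ℝ) T, HasDerivAt G
      ((w t)^2 * Real.exp (c₀ * t) * (eE t + (2 * b t + c₀) * E t)) t := by
    intro t ht
    have hw := hasDerivAt_weight m₁ m₂ ht.1
    have hex : HasDerivAt (fun t : ℝ => Real.exp (c₀ * t)) (Real.exp (c₀ * t) * c₀) t := by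
      have h : HasDerivAt (fun t : ℝ => c₀*t) c₀ t := by
        simpa using (hasDerivAt_id t).const_mul c₀
      exact h.exp
    have := ((hw.pow 2).mul (hdE t ht)).mul hex
    refine this.congr_deriv ?_
    simp only [hwdef, hbdef, Pi.pow_apply, Pi.mul_apply]
    ring
  have hdH : ∀ t ∈ Set.Ioo (0:ℝ) T, HasDerivAt H
      (Real.exp (-(c₀ * t)) * (eE t - c₀ * E t)) t := by
    intro t ht
    have hex : HasDerivAt (fun t : ℝ => Real.exp (-(c₀ * t))) (Real.exp (-(c₀ * t)) * (-c₀)) t := by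
      have h : HasDerivAt (fun t : ℝ => -(c₀*t)) (-c₀) t := by
        have h' := ((hasDerivAt_id t).const_mul c₀).neg; rw [mul_one] at h'; exact h'
      exact h.exp
    have := (hdE t ht).mul hex
    refine this.congr_deriv ?_
    ring
  have hThalf : T/2 ∈ Set.Ioo (0:ℝ) T := ⟨by linarith, by linarith⟩
  -- G is monotone from below up to T/2
  have hGmono : ∀ t ∈ Set.Ioo (0:ℝ) T, t ≤ T/2 → G t ≤ G (T/2) := by
    intro t ht htle
    have hsub : Set.Icc t (T/2) ⊆ Set.Ioo (0:ℝ) T := fun x hx =>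
      ⟨lt_of_lt_of_le ht.1 hx.1, lt_of_le_of_lt hx.2 hThalf.2⟩
    have hmono : MonotoneOn G (Set.Icc t (T/2)) := by
      apply monotoneOn_of_deriv_nonneg (convex_Icc t (T/2))
      · intro x hx
        exact ((hdG x (hsub hx)).differentiableAt).continuousAt.continuousWithinAt
      · intro x hx
        rw [interior_Icc] at hx
        have hx' := hsub (Set.Ioo_subset_Icc_self hx)
        exact ((hdG x hx').differentiableAt).differentiableWithinAt
      · intro x hx
        rw [interior_Icc] at hx
        have hx' := hsub (Set.Ioo_subset_Icc_self hx)
        rw [(hdG x hx').deriv]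
        have h1 : (0:ℝ) ≤ (w x)^2 * Real.exp (c₀ * x) := by positivity
        exact mul_nonneg h1 (hE1 x hx')
    exact hmono ⟨le_refl t, htle⟩ ⟨htle, le_refl _⟩ htle
  -- H is antitone from T/2 on
  have hHanti : ∀ t ∈ Set.Ioo (0:ℝ) T, T/2 ≤ t → H t ≤ H (T/2) := by
    intro t ht htle
    have hsub : Set.Icc (T/2) t ⊆ Set.Ioo (0:ℝ) T := fun x hx =>
      ⟨lt_of_lt_of_le hThalf.1 hx.1, lt_of_le_of_lt hx.2 ht.2⟩
    have hanti : AntitoneOn H (Set.Icc (T/2) t) := by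
      apply antitoneOn_of_deriv_nonpos (convex_Icc (T/2) t)
      · intro x hx
        exact ((hdH x (hsub hx)).differentiableAt).continuousAt.continuousWithinAt
      · intro x hx
        rw [interior_Icc] at hx
        have hx' := hsub (Set.Ioo_subset_Icc_self hx)
        exact ((hdH x hx').differentiableAt).differentiableWithinAt
      · intro x hx
        rw [interior_Icc] at hx
        have hx' := hsub (Set.Ioo_subset_Icc_self hx)
        rw [(hdH x hx').deriv]
        have h2 : eE x - c₀ * E x ≤ 0 := by linarith [hE2 x hx']
        exact mul_nonpos_of_nonneg_of_nonpos (Real.exp_nonneg _) h2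
    exact hanti ⟨le_refl _, htle⟩ ⟨htle, le_refl t⟩ htle
  -- the uniform bound
  set Cb : ℝ := max (Real.sqrt (G (T/2)))
      (Real.sqrt (E (T/2) * Real.exp (c₀ * T)) * w T) with hCbdef
  have hbound : ∀ t ∈ Set.Ioo (0:ℝ) T,
      ‖q t * (((2 * Real.sinh t) ^ m₁ * (2 * Real.sinh (2 * t)) ^ m₂ : ℝ) : ℂ)‖ ≤ Cb := by
    intro t ht
    have hwt : 0 < w t := hwpos t ht.1
    have hnorm : ‖q t * (((2 * Real.sinh t) ^ m₁ * (2 * Real.sinh (2 * t)) ^ m₂ : ℝ) : ℂ)‖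
        = ‖q t‖ * w t := by
      rw [norm_mul]
      congr 1
      rw [Complex.norm_real]
      exact abs_of_pos hwt
    rw [hnorm]
    have hqE : ‖q t‖ ≤ Real.sqrt (E t) := by
      rw [Complex.norm_def]
      apply Real.sqrt_le_sqrt
      simp only [hEdef]
      nlinarith [Complex.normSq_nonneg (q₁ t)]
    rcases le_or_gt t (T/2) with hcase | hcase
    · -- near 0 : use G
      have hG : (w t)^2 * E t ≤ G (T/2) := by
        have h1 : (w t)^2 * E t ≤ G t := by
          have hexp : (1:ℝ) ≤ Real.exp (c₀ * t) :=
            Real.one_le_exp (mul_nonneg hc₀pos.le ht.1.le)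
          have h0 : (0:ℝ) ≤ (w t)^2 * E t := mul_nonneg (sq_nonneg _) (hEnn t)
          have h3 := mul_le_mul_of_nonneg_left hexp h0
          rw [mul_one] at h3
          exact h3
        exact le_trans h1 (hGmono t ht hcase)
      have hle : ‖q t‖ * w t ≤ Real.sqrt (G (T/2)) := by
        have h2 : ‖q t‖ * w t ≤ Real.sqrt (E t) * Real.sqrt ((w t)^2) := by
          rw [Real.sqrt_sq hwt.le]
          exact mul_le_mul_of_nonneg_right hqE hwt.le
        rw [← Real.sqrt_mul (hEnn t)] at h2
        refine h2.trans ?_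
        apply Real.sqrt_le_sqrt
        rw [mul_comm]
        exact hG
      exact hle.trans (le_max_left _ _)
    · -- away from 0 : use H
      have hH : E t ≤ E (T/2) * Real.exp (c₀ * T) := by
        have h1 := hHanti t ht hcase.le
        simp only [hHdef] at h1
        have hexp : Real.exp (-(c₀ * t)) > 0 := Real.exp_pos _
        have : E t ≤ E (T/2) * Real.exp (-(c₀ * (T/2))) * Real.exp (c₀ * t) := by
          have := mul_le_mul_of_nonneg_right h1 (Real.exp_nonneg (c₀ * t))
          rwa [mul_assoc, ← Real.exp_add, neg_add_cancel, Real.exp_zero, mul_one] at this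
        refine this.trans ?_
        rw [mul_assoc, ← Real.exp_add]
        apply mul_le_mul_of_nonneg_left _ (hEnn _)
        apply Real.exp_le_exp.2
        have h3 : c₀ * t ≤ c₀ * T := mul_le_mul_of_nonneg_left ht.2.le hc₀pos.le
        have h4 : (0:ℝ) ≤ c₀ * (T/2) := mul_nonneg hc₀pos.le (by linarith)
        have h5 : Complex.normSq c * (T/2) ≥ 0 := by
      
          have := Complex.normSq_nonneg c
          nlinarith
        nlinarith [h3, h4]
      have hwT : w t ≤ w T := by
        have h1 : 0 ≤ 2*Real.sinh t := by
          have := Real.sinh_pos_iff.2 ht.1; linarith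
        have h2 : 0 ≤ 2*Real.sinh (2*t) := by
          have := Real.sinh_pos_iff.2 (show (0:ℝ) < 2*t by linarith [ht.1]); linarith
        have h3 : 2*Real.sinh t ≤ 2*Real.sinh T := by
          have := Real.sinh_le_sinh.2 ht.2.le; linarith
        have h4 : 2*Real.sinh (2*t) ≤ 2*Real.sinh (2*T) := by
          have := Real.sinh_le_sinh.2 (show 2*t ≤ 2*T by linarith [ht.2]); linarith
        exact mul_le_mul (pow_le_pow_left₀ h1 h3 m₁) (pow_le_pow_left₀ h2 h4 m₂)
          (pow_nonneg h2 m₂) (pow_nonneg (by linarith) m₁)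
      have hle : ‖q t‖ * w t ≤ Real.sqrt (E (T/2) * Real.exp (c₀ * T)) * w T := by
        apply mul_le_mul _ hwT hwt.le (Real.sqrt_nonneg _)
        exact hqE.trans (Real.sqrt_le_sqrt hH)
      exact hle.trans (le_max_right _ _)
  -- conclude integrability
  have hwcont : Continuous w := by
    rw [hwdef]; fun_prop
  have hcont : ContinuousOn
      (fun t : ℝ => q t * (((2 * Real.sinh t) ^ m₁ * (2 * Real.sinh (2 * t)) ^ m₂ : ℝ) : ℂ))
      (Set.Ioo 0 T) :=
    (hq.continuousOn).mul (Complex.continuous_ofReal.comp hwcont).continuousOn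
  have hmeas : MeasurableSet (Set.Ioo (0:ℝ) T) := measurableSet_Ioo
  apply MeasureTheory.Integrable.mono' (g := fun _ : ℝ => Cb)
  · exact MeasureTheory.integrableOn_const measure_Ioo_lt_top.ne
  · exact hcont.aestronglyMeasurable hmeas
  · exact (MeasureTheory.ae_restrict_iff' hmeas).2 (Filter.Eventually.of_forall hbound)

end
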